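/- Let C ⊆ ℝ^m be a rational polyhedral cone (the set of all nonnegative real linear combinations of a finite set of vectors in ℤ^m) such that C contains no line (C ∩ (−C) = {0}) and C has nonempty topological interior. Then the group of elements of GL(m,ℤ) (integer matrices invertible over ℤ) whose induced linear action on ℝ^m maps C onto C is finite. -/

import Mathlib

/-- A rational polyhedral cone in `ℝ^m`: the set of all nonnegative real linear
combinations of a finite set of vectors of `ℤ^m`. -/
def IsRatPolyCone (m : ℕ) (C : Set (Fin m → ℝ)) : Prop :=
  ∃ s : Finset (Fin m → ℤ),
    C = {x | ∃ c : (Fin m → ℤ) → ℝ, (∀ v, 0 ≤ c v) ∧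
      x = ∑ v ∈ s, c v • (fun i => (v i : ℝ))}

namespace StabAux
variable {m : ℕ}

noncomputable def cv (v : Fin m → ℤ) : Fin m → ℝ := fun i => (v i : ℝ)

def cone (s : Finset (Fin m → ℤ)) : Set (Fin m → ℝ) :=
  {x | ∃ c : (Fin m → ℤ) → ℝ, (∀ v, 0 ≤ c v) ∧
      x = ∑ v ∈ s, c v • (fun i => (v i : ℝ))}

lemma cv_inj : Function.Injective (cv (m := m)) := by
  intro a b h
  funext i
  have := congrFun h i
  simpa [cv] using this

lemma cv_eq_zero {v : Fin m → ℤ} : cv v = 0 ↔ v = 0 := by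
  constructor
  · intro h
    have h0 : cv v = cv (0 : Fin m → ℤ) := by funext i; simpa [cv] using congrFun h i
    exact cv_inj h0
  · rintro rfl; funext i; simp [cv]

lemma mem_cone {s : Finset (Fin m → ℤ)} {x : Fin m → ℝ} :
    x ∈ cone s ↔ ∃ c : (Fin m → ℤ) → ℝ, (∀ v, 0 ≤ c v) ∧ x = ∑ v ∈ s, c v • cv v :=
  Iff.rfl

lemma zero_mem_cone (s : Finset (Fin m → ℤ)) : (0 : Fin m → ℝ) ∈ cone s :=
  ⟨0, fun _ => le_rfl, by simp⟩

lemma gen_mem_cone {s : Finset (Fin m → ℤ)} {v : Fin m → ℤ} (hv : v ∈ s) : cv v ∈ cone s := by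
  classical
  refine ⟨fun u => if u = v then 1 else 0, fun u => by positivity, ?_⟩
  have : ∀ u ∈ s, (if u = v then (1:ℝ) else 0) • (fun i => ((u i : ℝ))) =
      if u = v then cv v else 0 := by
    intro u _
    by_cases h : u = v <;> simp only [h, if_true, if_false, one_smul, zero_smul] <;> rfl
  rw [Finset.sum_congr rfl this, Finset.sum_ite_eq' s v (fun _ => cv v)]
  simp [hv]

lemma add_mem_cone {s : Finset (Fin m → ℤ)} {x y : Fin m → ℝ}
    (hx : x ∈ cone s) (hy : y ∈ cone s) : x + y ∈ cone s := by
  obtain ⟨c, hc, rfl⟩ := hx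
  obtain ⟨d, hd, rfl⟩ := hy
  refine ⟨c + d, fun v => add_nonneg (hc v) (hd v), ?_⟩
  rw [← Finset.sum_add_distrib]
  simp [add_smul]

lemma smul_mem_cone {s : Finset (Fin m → ℤ)} {x : Fin m → ℝ} {a : ℝ}
    (ha : 0 ≤ a) (hx : x ∈ cone s) : a • x ∈ cone s := by
  obtain ⟨c, hc, rfl⟩ := hx
  refine ⟨a • c, fun v => mul_nonneg ha (hc v), ?_⟩
  rw [Finset.smul_sum]
  simp [smul_smul]

lemma sum_mem_cone {s : Finset (Fin m → ℤ)} {α : Type*} (t : Finset α) (f : α → (Fin m → ℝ))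
    (h : ∀ a ∈ t, f a ∈ cone s) : (∑ a ∈ t, f a) ∈ cone s := by
  classical
  induction t using Finset.induction_on with
  | empty => simpa using zero_mem_cone s
  | insert _ _ hnot ih =>
    rw [Finset.sum_insert hnot]
    exact add_mem_cone (h _ (Finset.mem_insert_self _ _))
      (ih (fun a ha => h a (Finset.mem_insert_of_mem ha)))


lemma cv_sub (a b : Fin m → ℤ) : cv (a - b) = cv a - cv b := by
  funext i; simp [cv]

noncomputable def ell (w : Fin m → ℤ) : (Fin m → ℝ) →ₗ[ℝ] ℝ where
  toFun := fun x => ∑ i, (w i : ℝ) * x i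
  map_add' := by intro x y; simp [mul_add, Finset.sum_add_distrib]
  map_smul' := by
    intro c x
    simp only [Pi.smul_apply, smul_eq_mul, RingHom.id_apply, Finset.mul_sum]
    exact Finset.sum_congr rfl fun i _ => by ring

lemma ell_cv (w ξ : Fin m → ℤ) : ell w (cv ξ) = ((∑ i, w i * ξ i : ℤ) : ℝ) := by
  simp only [ell, LinearMap.coe_mk, AddHom.coe_mk, cv]
  push_cast
  rfl

lemma exists_int_sep (s : Finset (Fin m → ℤ))
    (hline : cone s ∩ (-(cone s)) = {0}) :
    ∃ w : Fin m → ℤ, ∀ v ∈ s, v ≠ 0 → 0 < ∑ i, (w i : ℝ) * (v i : ℝ) := by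
  classical
  set s₀ : Finset (Fin m → ℤ) := s.filter (fun v => v ≠ 0) with hs₀
  set t : Finset (Fin m → ℝ) := s₀.image cv with ht
  have htc : ∀ y ∈ t, y ∈ cone s ∧ y ≠ 0 := by
    intro y hy
    obtain ⟨v, hv, rfl⟩ := Finset.mem_image.mp hy
    have hv' := Finset.mem_filter.mp hv
    exact ⟨gen_mem_cone hv'.1, fun h => hv'.2 (cv_eq_zero.mp h)⟩
  have h0K : (0 : Fin m → ℝ) ∉ convexHull ℝ (↑t : Set (Fin m → ℝ)) := by
    intro h0
    rw [Finset.convexHull_eq] at h0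
    obtain ⟨wt, hw0, hw1, hcm⟩ := h0
    rw [Finset.centerMass_eq_of_sum_1 _ _ hw1] at hcm
    have hy₀ : ∃ y₀ ∈ t, 0 < wt y₀ := by
      by_contra hno
      push_neg at hno
      have : ∑ y ∈ t, wt y = 0 :=
        Finset.sum_eq_zero fun y hy => le_antisymm (hno y hy) (hw0 y hy)
      rw [hw1] at this; exact one_ne_zero this
    obtain ⟨y₀, hy₀t, hy₀pos⟩ := hy₀
    set a : Fin m → ℝ := wt y₀ • y₀ with ha
    set b : Fin m → ℝ := ∑ y ∈ t.erase y₀, wt y • id y with hb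
    have hab : a + b = 0 := by
      rw [ha, hb, ← Finset.add_sum_erase _ _ hy₀t] at *
      simpa using hcm
    have haC : a ∈ cone s := smul_mem_cone hy₀pos.le (htc y₀ hy₀t).1
    have hbC : b ∈ cone s := by
      refine sum_mem_cone _ _ fun y hy => ?_
      have hyt := Finset.mem_of_mem_erase hy
      exact smul_mem_cone (hw0 y hyt) (htc y hyt).1
    have hamem : a ∈ cone s ∩ (-(cone s)) := by
      refine ⟨haC, ?_⟩
      rw [Set.mem_neg]
      have hnab : -a = b := neg_eq_of_add_eq_zero_right hab
      rw [hnab]; exact hbC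
    rw [hline] at hamem
    have : a ≠ 0 := smul_ne_zero (ne_of_gt hy₀pos) (htc y₀ hy₀t).2
    exact this hamem
  obtain ⟨f, u, hfu, hK⟩ :=
    geometric_hahn_banach_point_closed (convex_convexHull ℝ _)
      (t.finite_toSet.isCompact_convexHull (𝕜 := ℝ)).isClosed h0K
  have hu : 0 < u := by simpa using hfu
  have hfv : ∀ v ∈ s, v ≠ 0 → u < f (cv v) := by
    intro v hv hv0
    have : cv v ∈ (↑t : Set (Fin m → ℝ)) := by
      simp only [ht, Finset.coe_image, Set.mem_image, Finset.mem_coe]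
      exact ⟨v, Finset.mem_filter.mpr ⟨hv, hv0⟩, rfl⟩
    exact hK _ (subset_convexHull ℝ _ this)
  set B : ℝ := ∑ v ∈ s₀, ∑ i, |(v i : ℝ)| with hB
  have hBnn : 0 ≤ B := Finset.sum_nonneg fun v _ => Finset.sum_nonneg fun i _ => abs_nonneg _
  set K₀ : ℝ := (B + 1) / u with hK₀
  have hK₀u : K₀ * u = B + 1 := div_mul_cancel₀ _ (ne_of_gt hu)
  refine ⟨fun i => ⌈K₀ * f (fun j => if i = j then 1 else 0)⌉, ?_⟩
  intro v hv hv0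
  set e : Fin m → (Fin m → ℝ) := fun i => (fun j => if i = j then 1 else 0) with he
  have hfeq : f (cv v) = ∑ i, (v i : ℝ) * f (e i) := by
    have := (f : (Fin m → ℝ) →ₗ[ℝ] ℝ).pi_apply_eq_sum_univ (cv v)
    simpa [cv, smul_eq_mul] using this
  have hterm : ∀ i, (K₀ * f (e i)) * (v i : ℝ) - |(v i : ℝ)| ≤
      ((⌈K₀ * f (e i)⌉ : ℝ)) * (v i : ℝ) := by
    intro i
    have h1 : |((⌈K₀ * f (e i)⌉ : ℝ) - K₀ * f (e i)) * (v i : ℝ)| ≤ |(v i : ℝ)| := by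
      rw [abs_mul]
      have h2 : |((⌈K₀ * f (e i)⌉ : ℝ) - K₀ * f (e i))| ≤ 1 := by
        rw [abs_of_nonneg (by linarith [Int.le_ceil (K₀ * f (e i))])]
        linarith [Int.ceil_lt_add_one (K₀ * f (e i))]
      nlinarith [abs_nonneg ((v i : ℝ))]
    have := neg_abs_le (((⌈K₀ * f (e i)⌉ : ℝ) - K₀ * f (e i)) * (v i : ℝ))
    nlinarith [h1]
  have hsum : K₀ * f (cv v) - ∑ i, |(v i : ℝ)| ≤ ∑ i, ((⌈K₀ * f (e i)⌉ : ℝ)) * (v i : ℝ) := by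
    have := Finset.sum_le_sum (fun i (_ : i ∈ Finset.univ) => hterm i)
    rw [Finset.sum_sub_distrib] at this
    calc K₀ * f (cv v) - ∑ i, |(v i : ℝ)|
        = ∑ i, (K₀ * f (e i)) * (v i : ℝ) - ∑ i, |(v i : ℝ)| := by
          rw [hfeq, Finset.mul_sum]
          congr 1
          exact Finset.sum_congr rfl fun i _ => by ring
      _ ≤ _ := this
  have hvB : ∑ i, |(v i : ℝ)| ≤ B := by
    rw [hB]
    have hvs₀ : v ∈ s₀ := by rw [hs₀, Finset.mem_filter]; exact ⟨hv, hv0⟩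
    exact Finset.single_le_sum (f := fun v => ∑ i, |(v i : ℝ)|)
      (fun v _ => Finset.sum_nonneg fun i _ => abs_nonneg _) hvs₀
  have hKf : B + 1 ≤ K₀ * f (cv v) := by
    rw [← hK₀u]
    have hK₀pos : 0 < K₀ := div_pos (by linarith) hu
    nlinarith [hfv v hv hv0]
  calc (0:ℝ) < 1 := one_pos
    _ ≤ K₀ * f (cv v) - B := by linarith
    _ ≤ K₀ * f (cv v) - ∑ i, |(v i : ℝ)| := by linarith
    _ ≤ _ := hsum


lemma ell_nonneg {s : Finset (Fin m → ℤ)} {w : Fin m → ℤ}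
    (hw : ∀ v ∈ s, v ≠ 0 → 0 < ell w (cv v)) {x : Fin m → ℝ} (hx : x ∈ cone s) :
    0 ≤ ell w x ∧ (x ≠ 0 → 0 < ell w x) := by
  obtain ⟨c, hc, rfl⟩ := mem_cone.mp hx
  rw [map_sum]
  simp only [map_smul, smul_eq_mul]
  have hterm : ∀ v ∈ s, 0 ≤ c v * ell w (cv v) := by
    intro v hv
    by_cases h0 : v = 0
    · subst h0
      have : cv (0 : Fin m → ℤ) = 0 := cv_eq_zero.mpr rfl
      rw [this]; simp
    · exact mul_nonneg (hc v) (hw v hv h0).le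
  refine ⟨Finset.sum_nonneg hterm, ?_⟩
  intro hx0
  rcases (Finset.sum_nonneg hterm).lt_or_eq with h | h
  · exact h
  · exfalso
    apply hx0
    have hz := (Finset.sum_eq_zero_iff_of_nonneg hterm).mp h.symm
    refine Finset.sum_eq_zero fun v hv => ?_
    by_cases h0 : v = 0
    · subst h0
      rw [cv_eq_zero.mpr rfl]; simp
    · have : c v = 0 := by
        have := hz v hv
        have hpos := hw v hv h0
        exact by nlinarith [hc v]
      rw [this, zero_smul]

lemma ell_ge_one {s : Finset (Fin m → ℤ)} {w : Fin m → ℤ}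
    (hw : ∀ v ∈ s, v ≠ 0 → 0 < ell w (cv v)) {x : Fin m → ℝ} (hx : x ∈ cone s)
    (hlat : ∃ ξ, cv ξ = x) (hx0 : x ≠ 0) : 1 ≤ ell w x := by
  obtain ⟨ξ, rfl⟩ := hlat
  have hpos := (ell_nonneg hw hx).2 hx0
  rw [ell_cv] at hpos ⊢
  exact_mod_cast hpos

/-- irreducible nonzero lattice points of the cone -/

def irr (s : Finset (Fin m → ℤ)) : Set (Fin m → ℝ) :=
  {x | x ∈ cone s ∧ (∃ ξ, cv ξ = x) ∧ x ≠ 0 ∧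
    ∀ y z : Fin m → ℝ, y ∈ cone s → (∃ η, cv η = y) → y ≠ 0 →
      z ∈ cone s → (∃ ζ, cv ζ = z) → z ≠ 0 → x ≠ y + z}

lemma irr_bound {s : Finset (Fin m → ℤ)} {x : Fin m → ℝ} (hx : x ∈ irr s) (i : Fin m) :
    |x i| ≤ ∑ v ∈ s, |(v i : ℝ)| := by
  classical
  obtain ⟨hxC, ⟨ξ, hξ⟩, hx0, hxirr⟩ := hx
  obtain ⟨c, hc, hxeq⟩ := mem_cone.mp hxC
  set y : Fin m → ℝ := ∑ v ∈ s, ((⌊c v⌋₊ : ℝ)) • cv v with hy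
  have hyC : y ∈ cone s := ⟨fun v => (⌊c v⌋₊ : ℝ), fun v => by positivity, hy⟩
  have hyL : ∃ η, cv η = y := by
    refine ⟨∑ v ∈ s, (⌊c v⌋₊ : ℤ) • v, ?_⟩
    funext j
    rw [hy]
    simp only [cv, Finset.sum_apply, Pi.smul_apply, smul_eq_mul]
    push_cast
    simp
  have hxy : x - y = ∑ v ∈ s, (c v - (⌊c v⌋₊ : ℝ)) • cv v := by
    rw [hxeq, hy, ← Finset.sum_sub_distrib]
    exact Finset.sum_congr rfl fun v _ => by rw [sub_smul]
  have hxyC : x - y ∈ cone s :=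
    ⟨fun v => c v - (⌊c v⌋₊ : ℝ), fun v => sub_nonneg.mpr (Nat.floor_le (hc v)), hxy⟩
  have hxyL : ∃ ζ, cv ζ = x - y := by
    obtain ⟨η, hη⟩ := hyL
    exact ⟨ξ - η, by rw [cv_sub, hξ, hη]⟩
  by_cases hy0 : y = 0
  · -- x = fractional part sum
    have hxf : x = ∑ v ∈ s, (c v - (⌊c v⌋₊ : ℝ)) • cv v := by
      rw [← hxy, hy0, sub_zero]
    have : x i = ∑ v ∈ s, (c v - (⌊c v⌋₊ : ℝ)) * cv v i := by
      rw [hxf, Finset.sum_apply]; rfl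
    rw [this]
    calc |∑ v ∈ s, (c v - (⌊c v⌋₊ : ℝ)) * cv v i|
        ≤ ∑ v ∈ s, |(c v - (⌊c v⌋₊ : ℝ)) * cv v i| := Finset.abs_sum_le_sum_abs _ _
      _ ≤ ∑ v ∈ s, |(v i : ℝ)| := by
          refine Finset.sum_le_sum fun v _ => ?_
          rw [abs_mul]
          have h1 : |c v - (⌊c v⌋₊ : ℝ)| ≤ 1 := by
            rw [abs_of_nonneg (sub_nonneg.mpr (Nat.floor_le (hc v)))]
            have := Nat.lt_floor_add_one (c v)
            linarith
          have : cv v i = (v i : ℝ) := rfl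
          rw [this]
          nlinarith [abs_nonneg ((v i : ℝ))]
  · by_cases hxy0 : x - y = 0
    · -- x = y, an ℕ-combination
      have hxyeq : x = y := sub_eq_zero.mp hxy0
      have hx' : x = ∑ v ∈ s, ((⌊c v⌋₊ : ℝ)) • cv v := by rw [hxyeq, hy]
      have hex : ∃ v₀ ∈ s, ((⌊c v₀⌋₊ : ℝ)) • cv v₀ ≠ 0 := by
        by_contra hno
        push_neg at hno
        exact hx0 (by rw [hx']; exact Finset.sum_eq_zero hno)
      obtain ⟨v₀, hv₀s, hv₀⟩ := hex
      have hn₀ : 1 ≤ ⌊c v₀⌋₊ := by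
        rcases Nat.eq_zero_or_pos ⌊c v₀⌋₊ with h | h
        · exact absurd (by rw [h]; simp) hv₀
        · exact h
      have hcv₀ : cv v₀ ≠ 0 := fun h => hv₀ (by rw [h, smul_zero])
      have hv₀0 : v₀ ≠ 0 := fun h => hcv₀ (cv_eq_zero.mpr h)
      set z : Fin m → ℝ := x - cv v₀ with hz
      by_cases hz0 : z = 0
      · -- x = cv v₀
        have hxv : x = cv v₀ := by rw [← sub_eq_zero]; exact hz0
        rw [hxv]
        calc |cv v₀ i| = |(v₀ i : ℝ)| := rfl
          _ ≤ ∑ v ∈ s, |(v i : ℝ)| :=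
            Finset.single_le_sum (f := fun v => |(v i : ℝ)|) (fun v _ => abs_nonneg _) hv₀s
      · exfalso
        have hzC : z ∈ cone s := by
          refine ⟨Function.update (fun v => ((⌊c v⌋₊ : ℝ))) v₀ ((⌊c v₀⌋₊ : ℝ) - 1), ?_, ?_⟩
          · intro v
            by_cases hvv : v = v₀
            · subst hvv
              rw [Function.update_self]
              have : (1:ℝ) ≤ (⌊c v⌋₊ : ℝ) := by exact_mod_cast hn₀
              linarith
            · rw [Function.update_of_ne hvv]; positivity
          · have hsplit : ∀ (g : (Fin m → ℤ) → ℝ),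
                ∑ v ∈ s, g v • cv v = (∑ v ∈ s.erase v₀, g v • cv v) + g v₀ • cv v₀ := by
              intro g
              rw [Finset.sum_erase_add _ _ hv₀s]
            show z = ∑ v ∈ s,
              Function.update (fun v => ((⌊c v⌋₊ : ℝ))) v₀ ((⌊c v₀⌋₊ : ℝ) - 1) v • cv v
            rw [hz, hx']
            rw [hsplit (fun v => ((⌊c v⌋₊ : ℝ)))]
            rw [hsplit (Function.update (fun v => ((⌊c v⌋₊ : ℝ))) v₀ ((⌊c v₀⌋₊ : ℝ) - 1))]
            have herase : ∀ v ∈ s.erase v₀,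
                Function.update (fun v => ((⌊c v⌋₊ : ℝ))) v₀ ((⌊c v₀⌋₊ : ℝ) - 1) v • cv v
                  = ((⌊c v⌋₊ : ℝ)) • cv v := by
              intro v hv
              rw [Function.update_of_ne (Finset.ne_of_mem_erase hv)]
            rw [Finset.sum_congr rfl herase, Function.update_self, sub_smul, one_smul]
            abel
        have hzL : ∃ ζ, cv ζ = z := ⟨ξ - v₀, by rw [cv_sub, hξ]⟩
        exact hxirr (cv v₀) z (gen_mem_cone hv₀s) ⟨v₀, rfl⟩ hcv₀ hzC hzL hz0
          (by rw [hz]; abel)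
    · exact absurd (by rw [add_sub_cancel]) (fun h => (hxirr y (x - y) hyC hyL hy0 hxyC hxyL hxy0 h))


lemma irr_finite (s : Finset (Fin m → ℤ)) : (irr s).Finite := by
  classical
  set N : Fin m → ℤ := fun i => ⌈∑ v ∈ s, |(v i : ℝ)|⌉ with hN
  have hsub : irr s ⊆ cv '' (Set.univ.pi fun i => Set.Icc (-(N i)) (N i)) := by
    intro x hx
    obtain ⟨ξ, rfl⟩ := hx.2.1
    refine ⟨ξ, ?_, rfl⟩
    intro i _
    rw [Set.mem_Icc, ← abs_le]
    have h1 : |cv ξ i| ≤ ∑ v ∈ s, |(v i : ℝ)| := irr_bound hx i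
    have h2 : ((|ξ i| : ℤ) : ℝ) ≤ ((N i : ℤ) : ℝ) := by
      calc ((|ξ i| : ℤ) : ℝ) = |cv ξ i| := by push_cast [cv]; rfl
        _ ≤ ∑ v ∈ s, |(v i : ℝ)| := h1
        _ ≤ (N i : ℝ) := Int.le_ceil _
    exact_mod_cast h2
  exact Set.Finite.subset ((Set.Finite.pi fun i => Set.finite_Icc _ _).image cv) hsub

lemma mem_span_irr {s : Finset (Fin m → ℤ)} {w : Fin m → ℤ}
    (hw : ∀ v ∈ s, v ≠ 0 → 0 < ell w (cv v)) :
    ∀ (n : ℕ) (x : Fin m → ℝ), x ∈ cone s → (∃ ξ, cv ξ = x) → ell w x ≤ n →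
      x ∈ Submodule.span ℝ (irr s) := by
  intro n
  induction n with
  | zero =>
    intro x hxC hxL hle
    by_cases hx0 : x = 0
    · subst hx0; exact Submodule.zero_mem _
    · have := ell_ge_one hw hxC hxL hx0
      norm_num at hle
      linarith
  | succ n ih =>
    intro x hxC hxL hle
    by_cases hx0 : x = 0
    · subst hx0; exact Submodule.zero_mem _
    by_cases hxi : x ∈ irr s
    · exact Submodule.subset_span hxi
    · have hdec : ∃ y z : Fin m → ℝ, y ∈ cone s ∧ (∃ η, cv η = y) ∧ y ≠ 0 ∧
          z ∈ cone s ∧ (∃ ζ, cv ζ = z) ∧ z ≠ 0 ∧ x = y + z := by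
        by_contra hno
        push_neg at hno
        exact hxi ⟨hxC, hxL, hx0, fun y z h1 h2 h3 h4 h5 h6 =>
          hno y z h1 h2 h3 h4 h5 h6⟩
      obtain ⟨y, z, hyC, hyL, hy0, hzC, hzL, hz0, hxyz⟩ := hdec
      have h1 := ell_ge_one hw hyC hyL hy0
      have h2 := ell_ge_one hw hzC hzL hz0
      have hsum : ell w y + ell w z = ell w x := by rw [hxyz, map_add]
      have hy' : ell w y ≤ n := by push_cast at hle ⊢; linarith
      have hz' : ell w z ≤ n := by push_cast at hle ⊢; linarith
      rw [hxyz]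
      exact Submodule.add_mem _ (ih y hyC hyL hy') (ih z hzC hzL hz')



end StabAux

open StabAux in
/-- The group of elements of `GL(m,ℤ)` preserving a rational polyhedral cone that
contains no line and has nonempty interior is finite. -/
theorem stabilizer_of_salient_cone_finite (m : ℕ) (hm : 1 ≤ m)
    (C : Set (Fin m → ℝ)) (hC : IsRatPolyCone m C)
    (hline : C ∩ (-C) = {0})
    (hint : (interior C).Nonempty) :
    {g : Matrix.GeneralLinearGroup (Fin m) ℤ |
      (((g : Matrix (Fin m) (Fin m) ℤ).map (fun z : ℤ => (z : ℝ))).mulVec) '' C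
        = C}.Finite := by
  classical
  obtain ⟨s, rfl⟩ := hC
  -- the span of the generators is everything
  have hCsub : cone s ⊆ (Submodule.span ℝ (cv '' (s : Set (Fin m → ℤ)))) := by
    intro x hx
    obtain ⟨c, hc, rfl⟩ := mem_cone.mp hx
    exact Submodule.sum_mem _ fun v hv => Submodule.smul_mem _ _
      (Submodule.subset_span ⟨v, hv, rfl⟩)
  have hSgen : Submodule.span ℝ (cv '' (s : Set (Fin m → ℤ))) = ⊤ := by
    apply Submodule.eq_top_of_nonempty_interior'
    obtain ⟨x, hx⟩ := hint
    exact ⟨x, interior_mono hCsub hx⟩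
  -- separating functional
  obtain ⟨w, hw0⟩ := exists_int_sep s hline
  have hw : ∀ v ∈ s, v ≠ 0 → 0 < ell w (cv v) := by
    intro v hv h0
    simpa [ell, cv] using hw0 v hv h0
  -- irr spans
  have hspan : Submodule.span ℝ (irr s) = ⊤ := by
    rw [← top_le_iff, ← hSgen]
    rw [Submodule.span_le]
    rintro y ⟨v, hv, rfl⟩
    by_cases h0 : v = 0
    · subst h0
      rw [cv_eq_zero.mpr rfl]
      exact Submodule.zero_mem _
    · exact SetLike.mem_coe.mpr <| mem_span_irr hw ⌈ell w (cv v)⌉₊ (cv v)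
        (gen_mem_cone hv) ⟨v, rfl⟩ (Nat.le_ceil _)
  -- matrix infrastructure
  set M : Matrix.GeneralLinearGroup (Fin m) ℤ → Matrix (Fin m) (Fin m) ℝ :=
    fun g => (g : Matrix (Fin m) (Fin m) ℤ).map (fun z : ℤ => (z : ℝ)) with hM
  have hMmul : ∀ g₁ g₂, M g₁ * M g₂ = ((g₁ : Matrix (Fin m) (Fin m) ℤ) *
      (g₂ : Matrix (Fin m) (Fin m) ℤ)).map (fun z : ℤ => (z : ℝ)) := by
    intro g₁ g₂
    rw [hM]
    exact (Matrix.map_mul (f := Int.castRingHom ℝ)).symm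
  have hcomp : ∀ (g : Matrix.GeneralLinearGroup (Fin m) ℤ) (x : Fin m → ℝ),
      (M g⁻¹).mulVec ((M g).mulVec x) = x := by
    intro g x
    rw [Matrix.mulVec_mulVec, hMmul]
    have h1 : ((g⁻¹ : Matrix.GeneralLinearGroup (Fin m) ℤ) : Matrix (Fin m) (Fin m) ℤ) *
        (g : Matrix (Fin m) (Fin m) ℤ) = 1 := g.inv_mul
    rw [h1, Matrix.map_one _ (by simp) (by simp), Matrix.one_mulVec]
  have hinvSt : ∀ g : Matrix.GeneralLinearGroup (Fin m) ℤ,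
      (M g).mulVec '' cone s = cone s → (M g⁻¹).mulVec '' cone s = cone s := by
    intro g hg
    conv_lhs => rw [← hg]
    rw [← Set.image_comp]
    have : (M g⁻¹).mulVec ∘ (M g).mulVec = id := funext fun x => hcomp g x
    rw [this, Set.image_id]
  have hlat : ∀ (g : Matrix.GeneralLinearGroup (Fin m) ℤ) (ξ : Fin m → ℤ),
      (M g).mulVec (cv ξ) = cv ((g : Matrix (Fin m) (Fin m) ℤ).mulVec ξ) := by
    intro g ξ
    funext i
    simp only [hM, Matrix.mulVec, dotProduct, Matrix.map_apply, cv]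
    push_cast
    rfl
  have hinj : ∀ (g : Matrix.GeneralLinearGroup (Fin m) ℤ) (x : Fin m → ℝ),
      (M g).mulVec x = 0 → x = 0 := by
    intro g x hx
    have := hcomp g x
    rw [hx, Matrix.mulVec_zero] at this
    exact this.symm
  -- stabilizer maps irr into irr
  have hirrmap : ∀ g : Matrix.GeneralLinearGroup (Fin m) ℤ,
      (M g).mulVec '' cone s = cone s → ∀ x ∈ irr s, (M g).mulVec x ∈ irr s := by
    intro g hg x hx
    obtain ⟨hxC, ⟨ξ, hξ⟩, hx0, hxirr⟩ := hx
    have hginv := hinvSt g hg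
    refine ⟨hg ▸ Set.mem_image_of_mem _ hxC, ⟨(g : Matrix (Fin m) (Fin m) ℤ).mulVec ξ,
      by rw [← hlat, hξ]⟩, fun h => hx0 (hinj g x h), ?_⟩
    intro y z hyC hyL hy0 hzC hzL hz0 heq
    apply hxirr ((M g⁻¹).mulVec y) ((M g⁻¹).mulVec z)
    · rw [← hginv]; exact Set.mem_image_of_mem _ hyC
    · obtain ⟨η, rfl⟩ := hyL
      exact ⟨((g⁻¹ : Matrix.GeneralLinearGroup (Fin m) ℤ) : Matrix (Fin m) (Fin m) ℤ).mulVec η,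
        (hlat g⁻¹ η).symm⟩
    · intro h; exact hy0 (hinj g⁻¹ y h)
    · rw [← hginv]; exact Set.mem_image_of_mem _ hzC
    · obtain ⟨ζ, rfl⟩ := hzL
      exact ⟨((g⁻¹ : Matrix.GeneralLinearGroup (Fin m) ℤ) : Matrix (Fin m) (Fin m) ℤ).mulVec ζ,
        (hlat g⁻¹ ζ).symm⟩
    · intro h; exact hz0 (hinj g⁻¹ z h)
    · have := congrArg ((M g⁻¹).mulVec) heq
      rw [hcomp, Matrix.mulVec_add] at this
      exact this
  -- conclude finiteness
  have hIrrFin : (irr s).Finite := irr_finite s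
  haveI := hIrrFin.to_subtype
  set St : Set (Matrix.GeneralLinearGroup (Fin m) ℤ) :=
    {g | (M g).mulVec '' cone s = cone s} with hSt
  suffices h : Finite ↥St by exact @Set.toFinite _ St h
  set F : ↥St → (↥(irr s) → ↥(irr s)) := fun g x =>
    ⟨(M g.1).mulVec x.1, hirrmap g.1 g.2 x.1 x.2⟩ with hF0
  apply Finite.of_injective F
  intro g₁ g₂ hF
  have heq : ∀ x ∈ irr s, (M g₁.1).mulVec x = (M g₂.1).mulVec x := by
    intro x hx
    have := congrFun hF ⟨x, hx⟩
    exact Subtype.ext_iff.mp this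
  have hlin : Matrix.toLin' (M g₁.1) = Matrix.toLin' (M g₂.1) := by
    apply LinearMap.ext_on hspan
    intro x hx
    simpa [Matrix.toLin'_apply] using heq x hx
  have hMeq : M g₁.1 = M g₂.1 := Matrix.toLin'.injective hlin
  have hZeq : (g₁.1 : Matrix (Fin m) (Fin m) ℤ) = (g₂.1 : Matrix (Fin m) (Fin m) ℤ) := by
    ext i j
    have := congrFun (congrFun hMeq i) j
    simp only [hM, Matrix.map_apply] at this
    exact_mod_cast this
  exact Subtype.ext (Units.ext hZeq)
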